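/- Key estimate for the room variables: let f : ℝ³ → M₈(ℝ) be measurable with ∫_{ℝ³} ‖f(z)‖ dz < ∞, let r̄ > 0, A > 0, t ≥ 1, and let g : ℝ³ → ℝ⁸ be measurable with |g(x)| ≤ A t^{−3/2} for all x and g(x) = 0 whenever |x| > t + r̄. Then for every a ∈ ℝ and every d > 0, |∫∫_{ℝ³×ℝ³} 1_{[a,a+d]}(x₃) ⟨f(x−y) g(y), g(x)⟩ dx dy| ≤ π A² d (t + r̄)² t^{−3} ∫_{ℝ³} ‖f(z)‖ dz; in particular this quantity is bounded by a constant (depending only on A, r̄ and ∫‖f‖) times d/t. -/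

import Mathlib

open MeasureTheory Matrix
open scoped RealInnerProductSpace

lemma room_disc_volume (R : ℝ) (hR : 0 ≤ R) :
    volume {p : Fin 2 → ℝ | p 0 ^ 2 + p 1 ^ 2 ≤ R ^ 2}
      = ENNReal.ofReal R ^ 2 * ENNReal.ofReal Real.pi := by
  have hs : MeasurableSet {p : Fin 2 → ℝ | p 0 ^ 2 + p 1 ^ 2 ≤ R ^ 2} :=
    (((measurable_pi_apply (0 : Fin 2)).pow_const 2).add
      ((measurable_pi_apply (1 : Fin 2)).pow_const 2)) measurableSet_Iic
  have h := (EuclideanSpace.volume_preserving_symm_measurableEquiv_toLp (Fin 2)).measure_preimage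
    hs.nullMeasurableSet
  have hpre : (MeasurableEquiv.toLp 2 (Fin 2 → ℝ)).symm ⁻¹' {p | p 0 ^ 2 + p 1 ^ 2 ≤ R ^ 2}
      = Metric.closedBall (0 : EuclideanSpace ℝ (Fin 2)) R := by
    ext x
    simp only [Set.mem_preimage, Set.mem_setOf_eq, Metric.mem_closedBall, dist_zero_right,
      EuclideanSpace.norm_eq, Fin.sum_univ_two, MeasurableEquiv.coe_toLp_symm]
    rw [show R = Real.sqrt (R ^ 2) by rw [Real.sqrt_sq hR],
      Real.sqrt_le_sqrt_iff (by positivity)]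
    simp [sq_abs, Real.sq_sqrt (sq_nonneg R)]
  rw [← h, hpre, EuclideanSpace.volume_closedBall]
  simp only [Fintype.card_fin]
  rw [show ((2:ℕ):ℝ)/2 + 1 = 2 by norm_num, Real.Gamma_two, div_one,
    Real.sq_sqrt Real.pi_nonneg]

lemma room_discMeas (R : ℝ) :
    MeasurableSet {p : Fin 2 → ℝ | p 0 ^ 2 + p 1 ^ 2 ≤ R ^ 2} :=
  (((measurable_pi_apply (0 : Fin 2)).pow_const 2).add
    ((measurable_pi_apply (1 : Fin 2)).pow_const 2)) measurableSet_Iic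

lemma room_cylinder_volume (a d R : ℝ) (hR : 0 ≤ R) :
    volume {x : EuclideanSpace ℝ (Fin 3) |
        x 2 ∈ Set.Icc a (a + d) ∧ x 0 ^ 2 + x 1 ^ 2 ≤ R ^ 2}
      = ENNReal.ofReal d * (ENNReal.ofReal R ^ 2 * ENNReal.ofReal Real.pi) := by
  have hsPi : MeasurableSet {x : Fin 3 → ℝ |
      x 2 ∈ Set.Icc a (a + d) ∧ x 0 ^ 2 + x 1 ^ 2 ≤ R ^ 2} := by
    exact ((measurable_pi_apply (2 : Fin 3)) measurableSet_Icc).inter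
      ((((measurable_pi_apply (0 : Fin 3)).pow_const 2).add
        ((measurable_pi_apply (1 : Fin 3)).pow_const 2)) measurableSet_Iic)
  have h1 := (EuclideanSpace.volume_preserving_symm_measurableEquiv_toLp (Fin 3)).measure_preimage
    hsPi.nullMeasurableSet
  have hpre1 : (MeasurableEquiv.toLp 2 (Fin 3 → ℝ)).symm ⁻¹'
      {x : Fin 3 → ℝ | x 2 ∈ Set.Icc a (a + d) ∧ x 0 ^ 2 + x 1 ^ 2 ≤ R ^ 2}
      = {x : EuclideanSpace ℝ (Fin 3) |
        x 2 ∈ Set.Icc a (a + d) ∧ x 0 ^ 2 + x 1 ^ 2 ≤ R ^ 2} := by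
    ext x; simp [MeasurableEquiv.coe_toLp_symm]
  rw [hpre1] at h1
  rw [h1]
  have h2 := (MeasureTheory.volume_preserving_piFinSuccAbove (fun _ : Fin 3 => ℝ) 2).measure_preimage
    (s := (Set.Icc a (a + d)) ×ˢ {p : Fin 2 → ℝ | p 0 ^ 2 + p 1 ^ 2 ≤ R ^ 2})
    (measurableSet_Icc.prod (room_discMeas R)).nullMeasurableSet
  have hpre2 : (MeasurableEquiv.piFinSuccAbove (fun _ : Fin 3 => ℝ) 2) ⁻¹'
      ((Set.Icc a (a + d)) ×ˢ {p : Fin 2 → ℝ | p 0 ^ 2 + p 1 ^ 2 ≤ R ^ 2})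
      = {x : Fin 3 → ℝ | x 2 ∈ Set.Icc a (a + d) ∧ x 0 ^ 2 + x 1 ^ 2 ≤ R ^ 2} := by
    ext x
    simp [MeasurableEquiv.piFinSuccAbove_apply, Set.mem_prod, Fin.removeNth,
      show (2 : Fin 3).succAbove 0 = 0 from rfl, show (2 : Fin 3).succAbove 1 = 1 from rfl]
  rw [hpre2] at h2
  rw [h2, Measure.volume_eq_prod, Measure.prod_prod, Real.volume_Icc,
    show a + d - a = d by ring, room_disc_volume R hR]

set_option maxHeartbeats 2000000 in
/-- Key estimate for the room variables: if `∫‖f‖ < ∞` (operator norm), `t ≥ 1`,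
`|g(x)| ≤ A t^{−3/2}` everywhere and `g(x) = 0` for `|x| > t + rbar`, then for every `a ∈ ℝ`,
`d > 0`,
`|∬ 1_{[a,a+d]}(x₃) ⟨f(x−y) g(y), g(x)⟩ dx dy| ≤ π A² d (t+rbar)² t⁻³ ∫‖f‖`;
in particular the quantity is at most `(π A² (1+rbar)² ∫‖f‖) · (d/t)`, a constant depending only
on `A`, `rbar` and `∫‖f‖` times `d/t`. -/
theorem room_variable_estimate
    (f : EuclideanSpace ℝ (Fin 3) → Matrix (Fin 8) (Fin 8) ℝ)
    (hf_meas : ∀ i j, Measurable fun z => f z i j)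
    (hf_int : Integrable fun z => ‖Matrix.toEuclideanCLM (𝕜 := ℝ) (f z)‖)
    (rbar A t : ℝ) (hrbar : 0 < rbar) (hA : 0 < A) (ht : 1 ≤ t)
    (g : EuclideanSpace ℝ (Fin 3) → EuclideanSpace ℝ (Fin 8)) (hg_meas : Measurable g)
    (hg_bdd : ∀ x, ‖g x‖ ≤ A * t ^ (-(3 : ℝ) / 2))
    (hg_supp : ∀ x, t + rbar < ‖x‖ → g x = 0)
    (a d : ℝ) (hd : 0 < d) :
    |∫ x : EuclideanSpace ℝ (Fin 3), ∫ y : EuclideanSpace ℝ (Fin 3),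
        Set.indicator (Set.Icc a (a + d)) (fun _ => (1 : ℝ)) (x 2) *
          ⟪Matrix.toEuclideanCLM (𝕜 := ℝ) (f (x - y)) (g y), g x⟫| ≤
        Real.pi * A ^ 2 * d * (t + rbar) ^ 2 / t ^ 3 *
          ∫ z : EuclideanSpace ℝ (Fin 3), ‖Matrix.toEuclideanCLM (𝕜 := ℝ) (f z)‖ ∧
    |∫ x : EuclideanSpace ℝ (Fin 3), ∫ y : EuclideanSpace ℝ (Fin 3),
        Set.indicator (Set.Icc a (a + d)) (fun _ => (1 : ℝ)) (x 2) *
          ⟪Matrix.toEuclideanCLM (𝕜 := ℝ) (f (x - y)) (g y), g x⟫| ≤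
        (Real.pi * A ^ 2 * (1 + rbar) ^ 2 *
          ∫ z : EuclideanSpace ℝ (Fin 3), ‖Matrix.toEuclideanCLM (𝕜 := ℝ) (f z)‖) * (d / t) := by
  have ht0 : (0:ℝ) < t := lt_of_lt_of_le one_pos ht
  set F : EuclideanSpace ℝ (Fin 3) → (EuclideanSpace ℝ (Fin 8)) →L[ℝ] EuclideanSpace ℝ (Fin 8) :=
    fun z => Matrix.toEuclideanCLM (𝕜 := ℝ) (f z) with hF
  set I : ℝ := ∫ z : EuclideanSpace ℝ (Fin 3), ‖F z‖ with hIdef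
  have hI0 : 0 ≤ I := integral_nonneg fun z => norm_nonneg _
  set c : ℝ := A * t ^ (-(3 : ℝ) / 2) with hcdef
  have hc0 : 0 ≤ c := by positivity
  have hpow : t ^ (-(3:ℝ)/2) * t ^ (-(3:ℝ)/2) = (t ^ (3:ℕ))⁻¹ := by
    rw [← Real.rpow_add ht0, show (-(3:ℝ)/2 + -(3:ℝ)/2) = -3 by norm_num,
      Real.rpow_neg ht0.le, show ((3:ℝ)) = ((3:ℕ):ℝ) by norm_num, Real.rpow_natCast]
  have hc2 : c ^ 2 = A ^ 2 * (t ^ (3:ℕ))⁻¹ := by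
    rw [hcdef, mul_pow, pow_two (t ^ (-(3:ℝ)/2)), hpow]
  set R : ℝ := t + rbar with hRdef
  have hR0 : 0 ≤ R := by positivity
  set S : Set (EuclideanSpace ℝ (Fin 3)) :=
    {x | x 2 ∈ Set.Icc a (a + d) ∧ ‖x‖ ≤ R} with hSdef
  have hcoord : Measurable fun x : EuclideanSpace ℝ (Fin 3) => x 2 :=
    (measurable_pi_apply 2).comp (MeasurableEquiv.toLp 2 (Fin 3 → ℝ)).symm.measurable
  have hSmeas : MeasurableSet S :=
    (hcoord measurableSet_Icc).inter (measurable_norm measurableSet_Iic)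
  -- volume bound
  have hST : S ⊆ {x : EuclideanSpace ℝ (Fin 3) |
      x 2 ∈ Set.Icc a (a + d) ∧ x 0 ^ 2 + x 1 ^ 2 ≤ R ^ 2} := by
    rintro x ⟨hx1, hx2⟩
    refine ⟨hx1, ?_⟩
    have hnorm : ‖x‖ = Real.sqrt (x 0 ^ 2 + x 1 ^ 2 + x 2 ^ 2) := by
      rw [EuclideanSpace.norm_eq, Fin.sum_univ_three]
      simp [sq_abs]
    have hsum0 : 0 ≤ x 0 ^ 2 + x 1 ^ 2 + x 2 ^ 2 := by positivity
    have h2 : x 0 ^ 2 + x 1 ^ 2 + x 2 ^ 2 ≤ R ^ 2 := by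
      have := pow_le_pow_left₀ (norm_nonneg x) hx2 2
      rwa [hnorm, Real.sq_sqrt hsum0] at this
    nlinarith [sq_nonneg (x 2)]
  have hvolT := room_cylinder_volume a d R hR0
  have hSvol : volume S ≤ ENNReal.ofReal d * (ENNReal.ofReal R ^ 2 * ENNReal.ofReal Real.pi) := by
    rw [← hvolT]; exact measure_mono hST
  have hVne : ENNReal.ofReal d * (ENNReal.ofReal R ^ 2 * ENNReal.ofReal Real.pi) ≠ ⊤ :=
    ENNReal.mul_ne_top ENNReal.ofReal_ne_top
      (ENNReal.mul_ne_top (ENNReal.pow_ne_top ENNReal.ofReal_ne_top) ENNReal.ofReal_ne_top)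
  have hSfin : volume S ≠ ⊤ := (lt_of_le_of_lt hSvol hVne.lt_top).ne
  have hSreal : (volume S).toReal ≤ d * (R ^ 2 * Real.pi) := by
    have := ENNReal.toReal_mono hVne hSvol
    rwa [ENNReal.toReal_mul, ENNReal.toReal_mul, ENNReal.toReal_pow,
      ENNReal.toReal_ofReal hd.le, ENNReal.toReal_ofReal hR0,
      ENNReal.toReal_ofReal Real.pi_nonneg] at this
  -- pointwise bound for the inner integral
  set M : EuclideanSpace ℝ (Fin 3) → ℝ := S.indicator (fun _ => c ^ 2 * I) with hMdef
  have hMint : Integrable M :=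
    (integrable_indicator_iff hSmeas).2 (integrableOn_const hSfin)
  have hindle : ∀ s : ℝ, |Set.indicator (Set.Icc a (a + d)) (fun _ => (1:ℝ)) s| ≤ 1 := by
    intro s
    rw [Set.indicator_apply]
    split <;> simp
  have key : ∀ x : EuclideanSpace ℝ (Fin 3),
      ‖∫ y : EuclideanSpace ℝ (Fin 3),
        Set.indicator (Set.Icc a (a + d)) (fun _ => (1 : ℝ)) (x 2) *
          ⟪F (x - y) (g y), g x⟫‖ ≤ M x := by
    intro x
    by_cases hx : x ∈ S
    · have hxM : M x = c ^ 2 * I := Set.indicator_of_mem hx _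
      rw [hxM]
      calc ‖∫ y, Set.indicator (Set.Icc a (a + d)) (fun _ => (1:ℝ)) (x 2) *
              ⟪F (x - y) (g y), g x⟫‖
          ≤ ∫ y, ‖Set.indicator (Set.Icc a (a + d)) (fun _ => (1:ℝ)) (x 2) *
              ⟪F (x - y) (g y), g x⟫‖ := norm_integral_le_integral_norm _
        _ ≤ ∫ y, c ^ 2 * ‖F (x - y)‖ := by
            apply integral_mono_of_nonneg (Filter.Eventually.of_forall fun y => norm_nonneg _)
              ((hf_int.comp_sub_left x).const_mul (c ^ 2))
            apply Filter.Eventually.of_forall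
            intro y
            have hgg : ‖g y‖ * ‖g x‖ ≤ c * c :=
              mul_le_mul (hg_bdd y) (hg_bdd x) (norm_nonneg _) hc0
            have hop : ‖F (x - y) (g y)‖ ≤ ‖F (x - y)‖ * ‖g y‖ :=
              (F (x - y)).le_opNorm _
            have hinner : |⟪F (x - y) (g y), g x⟫| ≤ ‖F (x - y)‖ * (c * c) := by
              calc |⟪F (x - y) (g y), g x⟫| ≤ ‖F (x - y) (g y)‖ * ‖g x‖ :=
                    abs_real_inner_le_norm _ _
                _ ≤ (‖F (x - y)‖ * ‖g y‖) * ‖g x‖ :=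
                    mul_le_mul_of_nonneg_right hop (norm_nonneg _)
                _ = ‖F (x - y)‖ * (‖g y‖ * ‖g x‖) := by ring
                _ ≤ ‖F (x - y)‖ * (c * c) :=
                    mul_le_mul_of_nonneg_left hgg (norm_nonneg _)
            calc ‖Set.indicator (Set.Icc a (a + d)) (fun _ => (1:ℝ)) (x 2) *
                  ⟪F (x - y) (g y), g x⟫‖
                = |Set.indicator (Set.Icc a (a + d)) (fun _ => (1:ℝ)) (x 2)| *
                  |⟪F (x - y) (g y), g x⟫| := by
                  rw [Real.norm_eq_abs, abs_mul]
              _ ≤ 1 * (‖F (x - y)‖ * (c * c)) :=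
                  mul_le_mul (hindle _) hinner (abs_nonneg _) zero_le_one
              _ = c ^ 2 * ‖F (x - y)‖ := by ring
        _ = c ^ 2 * ∫ y, ‖F (x - y)‖ := integral_const_mul _ _
        _ = c ^ 2 * I := by
            rw [hIdef, integral_sub_left_eq_self (fun z => ‖F z‖) volume x]
    · have hzero : ∀ y : EuclideanSpace ℝ (Fin 3),
          Set.indicator (Set.Icc a (a + d)) (fun _ => (1:ℝ)) (x 2) *
            ⟪F (x - y) (g y), g x⟫ = 0 := by
        intro y
        rw [hSdef] at hx
        simp only [Set.mem_setOf_eq, not_and_or, not_le] at hx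
        rcases hx with hx | hx
        · rw [Set.indicator_of_notMem hx, zero_mul]
        · rw [hg_supp x hx, inner_zero_right, mul_zero]
      simp only [hzero, integral_zero, norm_zero]
      exact Set.indicator_nonneg (fun _ _ => by positivity) x
  -- main estimate
  have main : |∫ x : EuclideanSpace ℝ (Fin 3), ∫ y : EuclideanSpace ℝ (Fin 3),
      Set.indicator (Set.Icc a (a + d)) (fun _ => (1 : ℝ)) (x 2) *
        ⟪F (x - y) (g y), g x⟫| ≤ Real.pi * A ^ 2 * d * R ^ 2 / t ^ 3 * I := by
    calc |∫ x : EuclideanSpace ℝ (Fin 3), ∫ y : EuclideanSpace ℝ (Fin 3),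
        Set.indicator (Set.Icc a (a + d)) (fun _ => (1 : ℝ)) (x 2) *
          ⟪F (x - y) (g y), g x⟫|
        ≤ ∫ x : EuclideanSpace ℝ (Fin 3), ‖∫ y : EuclideanSpace ℝ (Fin 3),
          Set.indicator (Set.Icc a (a + d)) (fun _ => (1 : ℝ)) (x 2) *
            ⟪F (x - y) (g y), g x⟫‖ := by
          rw [← Real.norm_eq_abs]
          exact norm_integral_le_integral_norm _
      _ ≤ ∫ x, M x :=
          integral_mono_of_nonneg (Filter.Eventually.of_forall fun x => norm_nonneg _)
            hMint (Filter.Eventually.of_forall key)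
      _ = (volume S).toReal * (c ^ 2 * I) := by
          rw [hMdef, integral_indicator_const _ hSmeas, smul_eq_mul, measureReal_def]
      _ ≤ (d * (R ^ 2 * Real.pi)) * (c ^ 2 * I) :=
          mul_le_mul_of_nonneg_right hSreal (by positivity)
      _ = Real.pi * A ^ 2 * d * R ^ 2 / t ^ 3 * I := by
          rw [hc2]; field_simp
  constructor
  · exact main
  · refine le_trans main ?_
    have hRle : R ≤ t * (1 + rbar) := by rw [hRdef]; nlinarith
    have hfrac : R ^ 2 / t ^ 3 ≤ (1 + rbar) ^ 2 / t := by
      rw [div_le_div_iff₀ (by positivity) ht0]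
      calc R ^ 2 * t ≤ (t * (1 + rbar)) ^ 2 * t := by
            have h1 : R * R ≤ (t * (1 + rbar)) * (t * (1 + rbar)) :=
              mul_le_mul hRle hRle hR0 (by positivity)
            nlinarith
        _ = (1 + rbar) ^ 2 * t ^ 3 := by ring
    calc Real.pi * A ^ 2 * d * R ^ 2 / t ^ 3 * I
        = (Real.pi * A ^ 2 * I * d) * (R ^ 2 / t ^ 3) := by ring
      _ ≤ (Real.pi * A ^ 2 * I * d) * ((1 + rbar) ^ 2 / t) :=
          mul_le_mul_of_nonneg_left hfrac (by positivity)
      _ = (Real.pi * A ^ 2 * (1 + rbar) ^ 2 * I) * (d / t) := by ring
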